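/- The left center of the right-symmetric Witt algebra W_n^+ over a field of characteristic 0 consists exactly of the constant vector fields: a vector field a ∈ W_n^+ satisfies a ∘ b = 0 for all b ∈ W_n^+ if and only if every component polynomial a_i is a constant (i.e. lies in the image of K under the constant embedding). -/

import Mathlib

/-- The multiplication of the right-symmetric Witt algebra `W_n^+`:
`(a ∘ b)_i = ∑ j, b_j * ∂_j (a_i)`. -/
noncomputable def wmul {K : Type*} [CommSemiring K] {n : ℕ}
    (a b : Fin n → MvPolynomial (Fin n) K) : Fin n → MvPolynomial (Fin n) K :=
  fun i => ∑ j, b j * MvPolynomial.pderiv j (a i)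

open MvPolynomial in
lemma coeff_pderiv' {K : Type*} [CommSemiring K] {σ : Type*} [DecidableEq σ]
    (i : σ) (m : σ →₀ ℕ) (p : MvPolynomial σ K) :
    coeff m (pderiv i p) = (m i + 1 : ℕ) * coeff (m + Finsupp.single i 1) p := by
  induction p using MvPolynomial.induction_on' with
  | add p q hp hq => simp [hp, hq, mul_add]
  | monomial s c =>
    rw [MvPolynomial.pderiv_monomial, MvPolynomial.coeff_monomial, MvPolynomial.coeff_monomial]
    by_cases h2 : s = m + Finsupp.single i 1
    · subst h2
      have h1 : m + Finsupp.single i 1 - Finsupp.single i 1 = m :=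
        add_tsub_cancel_right _ _
      rw [if_pos h1, if_pos rfl]
      have hmi : (m + Finsupp.single i 1 : Finsupp σ ℕ) i = m i + 1 := by simp
      rw [hmi]; push_cast; ring
    · rw [if_neg h2, mul_zero]
      by_cases h1 : s - Finsupp.single i 1 = m
      · rw [if_pos h1]
        have hs : s i = 0 := by
          by_contra hs
          exact h2 (by rw [← h1]; exact (tsub_add_cancel_of_le
            (Finsupp.single_le_iff.mpr (by omega))).symm)
        simp [hs]
      · rw [if_neg h1]

open MvPolynomial in
lemma eq_C_of_pderiv_eq_zero {K : Type*} [Field K] [CharZero K] {σ : Type*} [DecidableEq σ]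
    (p : MvPolynomial σ K) (h : ∀ i, pderiv i p = 0) :
    p ∈ Set.range (MvPolynomial.C : K → MvPolynomial σ K) := by
  refine ⟨coeff 0 p, ?_⟩
  ext m
  rw [coeff_C]
  split_ifs with hm
  · subst hm; rfl
  · obtain ⟨i, hi⟩ : ∃ i, m i ≠ 0 := by
      by_contra hc
      push_neg at hc
      exact (Ne.symm hm) (Finsupp.ext fun j => hc j)
    have := coeff_pderiv' i (m - Finsupp.single i 1) p
    rw [h i] at this
    have hms : m - Finsupp.single i 1 + Finsupp.single i 1 = m :=
      tsub_add_cancel_of_le (Finsupp.single_le_iff.mpr (by omega))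
    rw [hms] at this
    have hcast : (((m - Finsupp.single i 1 : Finsupp σ ℕ) i + 1 : ℕ) : K) ≠ 0 :=
      Nat.cast_ne_zero.mpr (Nat.succ_ne_zero _)
    simpa [eq_comm] using (mul_eq_zero.mp this.symm).resolve_left hcast

/-- the left center of `W_n^+` (char 0) consists exactly of the constant
vector fields: `a ∘ b = 0` for all `b` iff every component `a_i` is a constant. -/
theorem wittRsym_left_center {K : Type*} [Field K] [CharZero K] {n : ℕ} (hn : 1 ≤ n)
    (a : Fin n → MvPolynomial (Fin n) K) :
    (∀ b : Fin n → MvPolynomial (Fin n) K, wmul a b = 0) ↔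
      ∀ i, a i ∈ Set.range (MvPolynomial.C : K → MvPolynomial (Fin n) K) := by
  constructor
  · intro h i
    apply eq_C_of_pderiv_eq_zero
    intro j
    have := congrFun (h (Pi.single j 1)) i
    simpa [wmul, Pi.single_apply, Finset.sum_ite_eq'] using this
  · intro h b
    funext i
    obtain ⟨c, hc⟩ := h i
    simp [wmul, ← hc, MvPolynomial.pderiv_C]
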